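/- Let $X_1, X_2$ be unit vectors with $X_1^TX_2 = -\hat\rho \in (0,1)$, $\hat\varphi^2 = 1-\hat\rho$, and let $X_3 = C(X_1+X_2)/2 + U + V$, $X_4 = C(X_1+X_2)/2 + U - V$ where $C > 1$, $C^2\hat\varphi^2/2 < 1$, $U, V$ orthogonal to $X_1, X_2$ and to each other, and $\hat\tau^2 := \|U\|_2^2$ satisfies $0 < \hat\tau^2 < 1 - C^2\hat\varphi^2/2$. Then the compatibility constant for $S_0 = \{1,2\}$ is $\hat\phi^2(S_0) = \hat\varphi^2\hat\tau^2/(C^2\hat\varphi^2/2 + \hat\tau^2)$, i.e. $2/\hat\phi^2(S_0) = 2/\hat\varphi^2 + C^2/\hat\tau^2$. -/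

import Mathlib

set_option maxHeartbeats 800000

open scoped RealInnerProductSpace

/-- compatibility constant for s₀ = m₀ = 2 with common and unique parts. -/
theorem stmt15 (n : ℕ) (X1 X2 X3 X4 U V : EuclideanSpace ℝ (Fin n)) (ρ C τ2 : ℝ)
    (h1 : ‖X1‖ = 1) (h2 : ‖X2‖ = 1) (hρ : ⟪X1, X2⟫ = -ρ)
    (hρ0 : 0 < ρ) (hρ1 : ρ < 1)
    (hX3 : X3 = (C / 2) • (X1 + X2) + U + V)
    (hX4 : X4 = (C / 2) • (X1 + X2) + U - V)
    (hU1 : ⟪U, X1⟫ = 0) (hU2 : ⟪U, X2⟫ = 0)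
    (hV1 : ⟪V, X1⟫ = 0) (hV2 : ⟪V, X2⟫ = 0)
    (hUV : ⟪U, V⟫ = 0)
    (hC : 1 < C) (hC2 : C ^ 2 * (1 - ρ) / 2 < 1)
    (hτ : τ2 = ‖U‖ ^ 2) (hτ0 : 0 < τ2) (hτ1 : τ2 < 1 - C ^ 2 * (1 - ρ) / 2) :
    IsLeast {t : ℝ | ∃ b1 b2 b3 b4 : ℝ, |b1| + |b2| = 1 ∧ |b3| + |b4| ≤ 1 ∧
        t = 2 * ‖b1 • X1 + b2 • X2 - b3 • X3 - b4 • X4‖ ^ 2}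
      ((1 - ρ) * τ2 / (C ^ 2 * (1 - ρ) / 2 + τ2)) ∧
    2 / ((1 - ρ) * τ2 / (C ^ 2 * (1 - ρ) / 2 + τ2)) = 2 / (1 - ρ) + C ^ 2 / τ2 := by
  have hρ' : ⟪X2, X1⟫ = -ρ := by rw [real_inner_comm]; exact hρ
  have hU1' : ⟪X1, U⟫ = 0 := by rw [real_inner_comm]; exact hU1
  have hU2' : ⟪X2, U⟫ = 0 := by rw [real_inner_comm]; exact hU2
  have hV1' : ⟪X1, V⟫ = 0 := by rw [real_inner_comm]; exact hV1
  have hV2' : ⟪X2, V⟫ = 0 := by rw [real_inner_comm]; exact hV2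
  have hUV' : ⟪V, U⟫ = 0 := by rw [real_inner_comm]; exact hUV
  have hX1X1 : ⟪X1, X1⟫ = 1 := by rw [real_inner_self_eq_norm_sq, h1]; norm_num
  have hX2X2 : ⟪X2, X2⟫ = 1 := by rw [real_inner_self_eq_norm_sq, h2]; norm_num
  have hUU : ⟪U, U⟫ = τ2 := by rw [real_inner_self_eq_norm_sq, hτ]
  have hVV : ⟪V, V⟫ = ‖V‖ ^ 2 := real_inner_self_eq_norm_sq V
  have hφ0 : (0:ℝ) < 1 - ρ := by linarith only [hρ1]
  have hC0 : (0:ℝ) < C := by linarith only [hC]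
  have hDex0 : (0:ℝ) < C ^ 2 * (1 - ρ) / 2 + τ2 := by positivity
  have key : ∀ b1 b2 b3 b4 : ℝ, ‖b1 • X1 + b2 • X2 - b3 • X3 - b4 • X4‖ ^ 2 =
      (1 - ρ) / 2 * ((b1 + b2) - (b3 + b4) * C) ^ 2 + (1 + ρ) / 2 * (b1 - b2) ^ 2
        + (b3 + b4) ^ 2 * τ2 + (b3 - b4) ^ 2 * ‖V‖ ^ 2 := by
    intro b1 b2 b3 b4
    have hw : b1 • X1 + b2 • X2 - b3 • X3 - b4 • X4 =
        (b1 - (b3 + b4) * (C / 2)) • X1 + (b2 - (b3 + b4) * (C / 2)) • X2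
          + (-(b3 + b4)) • U + (-(b3 - b4)) • V := by
      rw [hX3, hX4]; module
    rw [hw, ← real_inner_self_eq_norm_sq]
    simp only [inner_add_left, inner_add_right, real_inner_smul_left, real_inner_smul_right,
      hρ, hρ', hU1, hU2, hV1, hV2, hUV, hU1', hU2', hV1', hV2', hUV',
      hX1X1, hX2X2, hUU, hVV]
    ring
  obtain ⟨D, hD⟩ : ∃ D : ℝ, C ^ 2 * (1 - ρ) / 2 + τ2 = D := ⟨_, rfl⟩
  have hD0 : (0:ℝ) < D := hD ▸ hDex0
  have hD' : D ≠ 0 := ne_of_gt hD0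
  have h2D : 2 * D = C ^ 2 * (1 - ρ) + 2 * τ2 := by rw [← hD]; ring
  rw [hD]
  constructor
  · constructor
    · -- membership: b1 = b2 = 1/2, b3 = b4 = C(1-ρ)/(4D)
      refine ⟨1/2, 1/2, C * (1 - ρ) / (4 * D), C * (1 - ρ) / (4 * D), ?_, ?_, ?_⟩
      · rw [abs_of_nonneg (by norm_num : (0:ℝ) ≤ 1/2)]; norm_num
      · have hb0 : (0:ℝ) ≤ C * (1 - ρ) / (4 * D) := by positivity
        rw [abs_of_nonneg hb0]
        rw [← add_div, div_le_one (by positivity)]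
        have h0 : (0:ℝ) ≤ (C - 1) * (C * (1 - ρ)) :=
          mul_nonneg (by linarith only [hC]) (mul_nonneg hC0.le hφ0.le)
        nlinarith only [h0, h2D, hτ0]
      · rw [key, ← hD]
        field_simp
        ring
    · -- lower bound
      rintro x ⟨b1, b2, b3, b4, hb12, hb34, rfl⟩
      rw [key]
      have hV0 : (0:ℝ) ≤ ‖V‖ ^ 2 := by positivity
      have hq : (0:ℝ) ≤ C ^ 2 * (1 - ρ) := by positivity
      have hτD : τ2 ≤ D := by linarith only [h2D, hq]
      have hMle : (1 - ρ) * τ2 / D ≤ 1 - ρ := by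
        rw [div_le_iff₀ hD0]
        exact mul_le_mul_of_nonneg_left hτD hφ0.le
      have main : ∀ s u w : ℝ, w ^ 2 = 1 →
          (1 - ρ) * τ2 / D ≤
            2 * ((1 - ρ) / 2 * (w - s * C) ^ 2 + (1 + ρ) / 2 * u ^ 2 + s ^ 2 * τ2) := by
        intro s u w hw2
        rw [div_le_iff₀ hD0]
        have hkey : ((1 - ρ) * (w - s * C) ^ 2 + 2 * s ^ 2 * τ2) * (2 * D)
            - 2 * (1 - ρ) * τ2 * w ^ 2 = (2 * D * s - C * (1 - ρ) * w) ^ 2 := by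
          linear_combination ((1 - ρ) * w ^ 2 - 2 * D * s ^ 2) * h2D
        rw [hw2] at hkey
        linarith only [hkey, sq_nonneg (2 * D * s - C * (1 - ρ) * w),
          mul_nonneg (mul_nonneg (by linarith only [hρ0] : (0:ℝ) ≤ 1 + ρ)
            (sq_nonneg u)) hD0.le]
      have hcase : (b1 + b2) ^ 2 = 1 ∨ (b1 - b2) ^ 2 = 1 := by
        rcases abs_cases b1 with ⟨e1, _⟩ | ⟨e1, _⟩ <;> rcases abs_cases b2 with ⟨e2, _⟩ | ⟨e2, _⟩ <;>
          rw [e1, e2] at hb12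
        · left; rw [show b1 + b2 = 1 by linarith only [hb12]]; norm_num
        · right; rw [show b1 - b2 = 1 by linarith only [hb12]]; norm_num
        · right; rw [show b1 - b2 = -1 by linarith only [hb12]]; norm_num
        · left; rw [show b1 + b2 = -1 by linarith only [hb12]]; norm_num
      rcases hcase with h | h
      · have hmain := main (b3 + b4) (b1 - b2) (b1 + b2) h
        linarith only [hmain, mul_nonneg (sq_nonneg (b3 - b4)) hV0]
      · -- (b1 - b2)^2 = 1
        have h1ρ : (1 + ρ) / 2 * (b1 - b2) ^ 2 = (1 + ρ) / 2 := by rw [h]; ring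
        rw [h1ρ]
        linarith only [hMle, mul_nonneg hφ0.le (sq_nonneg (b1 + b2 - (b3 + b4) * C)),
          mul_nonneg (sq_nonneg (b3 + b4)) hτ0.le,
          mul_nonneg (sq_nonneg (b3 - b4)) hV0, hρ0]
  · rw [← hD]
    have hφ' : (1 - ρ) ≠ 0 := ne_of_gt hφ0
    have hτ' : τ2 ≠ 0 := ne_of_gt hτ0
    field_simp
    ring
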